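/- The Lie algebra g is solvable; in fact its derived algebra [g, g] is abelian, so the derived series of g reaches zero after two steps: [[g,g],[g,g]] = 0. -/

import Mathlib

noncomputable section

inductive HWRel (F : Type) [Field F] :
    FreeAlgebra F (Fin 2) → FreeAlgebra F (Fin 2) → Prop
  | comm : HWRel F (FreeAlgebra.ι F 0 * FreeAlgebra.ι F 1)
      (FreeAlgebra.ι F 1 * FreeAlgebra.ι F 0 + 1)

abbrev HW (F : Type) [Field F] := RingQuot (HWRel F)

def HW.A (F : Type) [Field F] : HW F :=
  RingQuot.mkAlgHom F (HWRel F) (FreeAlgebra.ι F 0)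

def HW.B (F : Type) [Field F] : HW F :=
  RingQuot.mkAlgHom F (HWRel F) (FreeAlgebra.ι F 1)

/-- The Lie subalgebra `g`: the linear span of `{B*A^2} ∪ {A^n : n ≥ 1}`. -/
def hwG (F : Type) [Field F] : Submodule F (HW F) :=
  Submodule.span F ({HW.B F * HW.A F ^ 2} ∪ {x | ∃ n : ℕ, 1 ≤ n ∧ x = HW.A F ^ n})

/-- The derived algebra `[g, g]`: the span of all brackets of elements of `g`. -/
def hwGderived (F : Type) [Field F] : Submodule F (HW F) :=
  Submodule.span F {z | ∃ x ∈ hwG F, ∃ y ∈ hwG F, z = ⁅x, y⁆}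

lemma HW.AB (F : Type) [Field F] : HW.A F * HW.B F = HW.B F * HW.A F + 1 := by
  have h := RingQuot.mkAlgHom_rel F (HWRel.comm (F := F))
  simpa [HW.A, HW.B, map_mul, map_add, map_one] using h

lemma HW.pow_B (F : Type) [Field F] (n : ℕ) :
    HW.A F ^ (n + 1) * HW.B F
      = HW.B F * HW.A F ^ (n + 1) + ((n : F) + 1) • HW.A F ^ n := by
  induction n with
  | zero => simpa using HW.AB F
  | succ n ih =>
    rw [pow_succ, mul_assoc, HW.AB, mul_add, mul_one, ← mul_assoc, ih]
    rw [add_mul, smul_mul_assoc, mul_assoc, ← pow_succ, ← pow_succ]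
    push_cast
    module

def hwC (F : Type) [Field F] : Submodule F (HW F) :=
  Submodule.span F {x | ∃ n : ℕ, 1 ≤ n ∧ x = HW.A F ^ n}

lemma lie_BA2_pow (F : Type) [Field F] (n : ℕ) :
    ⁅HW.B F * HW.A F ^ 2, HW.A F ^ (n + 1)⁆
      = -(((n : F) + 1) • HW.A F ^ (n + 2)) := by
  rw [Ring.lie_def]
  have h : HW.A F ^ (n + 1) * (HW.B F * HW.A F ^ 2)
      = HW.B F * HW.A F ^ (n + 3) + ((n : F) + 1) • HW.A F ^ (n + 2) := by
    rw [← mul_assoc, HW.pow_B, add_mul, smul_mul_assoc, mul_assoc, ← pow_add, ← pow_add]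
  rw [h, mul_assoc, ← pow_add]
  have : 2 + (n + 1) = n + 3 := by omega
  rw [this]
  module

lemma lie_mem_C (F : Type) [Field F] :
    ∀ x ∈ hwG F, ∀ y ∈ hwG F, ⁅x, y⁆ ∈ hwC F := by
  -- first for generators
  have gen : ∀ u ∈ ({HW.B F * HW.A F ^ 2} ∪ {x | ∃ n : ℕ, 1 ≤ n ∧ x = HW.A F ^ n}),
      ∀ v ∈ ({HW.B F * HW.A F ^ 2} ∪ {x | ∃ n : ℕ, 1 ≤ n ∧ x = HW.A F ^ n}),
      ⁅u, v⁆ ∈ hwC F := by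
    have key : ∀ n : ℕ, 1 ≤ n →
        ⁅HW.B F * HW.A F ^ 2, HW.A F ^ n⁆ ∈ hwC F := by
      intro n hn
      obtain ⟨m, rfl⟩ := Nat.exists_eq_add_of_le hn
      rw [add_comm 1 m, lie_BA2_pow]
      exact neg_mem (Submodule.smul_mem _ _ (Submodule.subset_span ⟨m + 2, by omega, rfl⟩))
    rintro u (rfl | ⟨m, hm, rfl⟩) v (rfl | ⟨n, hn, rfl⟩)
    · simp [Ring.lie_def]
    · exact key n hn
    · rw [Ring.lie_def, ← neg_sub, ← Ring.lie_def]; exact neg_mem (key m hm)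
    · have : Commute (HW.A F ^ m) (HW.A F ^ n) := (Commute.refl _).pow_pow _ _
      rw [Ring.lie_def, this.eq, sub_self]
      exact zero_mem _
  intro x hx
  refine Submodule.span_induction (p := fun x _ => ∀ y ∈ hwG F, ⁅x, y⁆ ∈ hwC F)
    ?_ ?_ ?_ ?_ hx
  · intro u hu y hy
    refine Submodule.span_induction (p := fun y _ => ⁅u, y⁆ ∈ hwC F)
      ?_ ?_ ?_ ?_ hy
    · intro v hv; exact gen u hu v hv
    · simp [Ring.lie_def]
    · intro a b _ _ ha hb; rw [Ring.lie_def, mul_add, add_mul, add_sub_add_comm, ← Ring.lie_def, ← Ring.lie_def]; exact add_mem ha hb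
    · intro c a _ ha; rw [Ring.lie_def, mul_smul_comm, smul_mul_assoc, ← smul_sub, ← Ring.lie_def]; exact Submodule.smul_mem _ _ ha
  · intro y _; simp [Ring.lie_def]
  · intro a b _ _ ha hb y hy; rw [Ring.lie_def, mul_add, add_mul, add_sub_add_comm, ← Ring.lie_def, ← Ring.lie_def]; exact add_mem (ha y hy) (hb y hy)
  · intro c a _ ha y hy; rw [Ring.lie_def, smul_mul_assoc, mul_smul_comm, ← smul_sub, ← Ring.lie_def]; exact Submodule.smul_mem _ _ (ha y hy)

lemma C_abelian (F : Type) [Field F] :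
    ∀ x ∈ hwC F, ∀ y ∈ hwC F, ⁅x, y⁆ = (0 : HW F) := by
  intro x hx
  refine Submodule.span_induction (p := fun x _ => ∀ y ∈ hwC F, ⁅x, y⁆ = 0) ?_ ?_ ?_ ?_ hx
  · rintro u ⟨m, _, rfl⟩ y hy
    refine Submodule.span_induction (p := fun y _ => ⁅HW.A F ^ m, y⁆ = 0) ?_ ?_ ?_ ?_ hy
    · rintro v ⟨n, _, rfl⟩
      have : Commute (HW.A F ^ m) (HW.A F ^ n) := (Commute.refl _).pow_pow _ _
      rw [Ring.lie_def, this.eq, sub_self]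
    · simp [Ring.lie_def]
    · intro a b _ _ ha hb; rw [Ring.lie_def, mul_add, add_mul, add_sub_add_comm, ← Ring.lie_def, ← Ring.lie_def, ha, hb, add_zero]
    · intro c a _ ha; rw [Ring.lie_def, mul_smul_comm, smul_mul_assoc, ← smul_sub, ← Ring.lie_def, ha, smul_zero]
  · intro y _; simp [Ring.lie_def]
  · intro a b _ _ ha hb y hy; rw [Ring.lie_def, mul_add, add_mul, add_sub_add_comm, ← Ring.lie_def, ← Ring.lie_def, ha y hy, hb y hy, add_zero]
  · intro c a _ ha y hy; rw [Ring.lie_def, smul_mul_assoc, mul_smul_comm, ← smul_sub, ← Ring.lie_def, ha y hy, smul_zero]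

lemma derived_le_C (F : Type) [Field F] : hwGderived F ≤ hwC F := by
  rw [hwGderived]
  refine Submodule.span_le.2 ?_
  rintro z ⟨x, hx, y, hy, rfl⟩
  exact lie_mem_C F x hx y hy

/-- `g` is solvable; in fact its derived algebra `[g, g]` is abelian, so the derived
series reaches zero after two steps: `[[g,g],[g,g]] = 0`. -/
theorem hwG_solvable (F : Type) [Field F] [CharZero F] :
    (∀ x ∈ hwGderived F, ∀ y ∈ hwGderived F, ⁅x, y⁆ = (0 : HW F)) ∧
      Submodule.span F
        {z | ∃ x ∈ hwGderived F, ∃ y ∈ hwGderived F, z = ⁅x, y⁆} = ⊥ := by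
  have h1 : ∀ x ∈ hwGderived F, ∀ y ∈ hwGderived F, ⁅x, y⁆ = (0 : HW F) :=
    fun x hx y hy => C_abelian F x (derived_le_C F hx) y (derived_le_C F hy)
  refine ⟨h1, ?_⟩
  rw [Submodule.span_eq_bot]
  rintro z ⟨x, hx, y, hy, rfl⟩
  exact h1 x hx y hy
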